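/- Consistency of the impedance load model with the synchronous steady state. Let g : ℝ_{≥0} → ℝ and b : ℝ_{≥0} → ℝ and define i_l(w) = (g(‖w‖)·I₂ + b(‖w‖)·j)·w for w ∈ ℝ². Then for every ω0 ∈ ℝ and every w0 ∈ ℝ², the curve t ↦ i_l(R(ω0 t)·w0) is differentiable and satisfies d/dt i_l(R(ω0 t)·w0) = ω0·j·i_l(R(ω0 t)·w0) for all t ∈ ℝ. -/

import Mathlib

noncomputable section
open Matrix

/-- Vectors in ℝ². -/
abbrev V2 : Type := Fin 2 → ℝ
/-- 2×2 real matrices. -/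
abbrev M2 : Type := Matrix (Fin 2) (Fin 2) ℝ

/-- The 90° rotation matrix `j`. -/
def j2 : M2 := !![0, -1; 1, 0]

/-- The rotation matrix `R(θ)`. -/
def Rot (θ : ℝ) : M2 := !![Real.cos θ, -Real.sin θ; Real.sin θ, Real.cos θ]

/-- The unit vector `r(θ) = (cos θ, sin θ)`. -/
def rvec (θ : ℝ) : V2 := ![Real.cos θ, Real.sin θ]

/-- The Euclidean norm on ℝ². -/
def enorm2 (w : V2) : ℝ := Real.sqrt (w 0 ^ 2 + w 1 ^ 2)

lemma enorm2_rot (θ : ℝ) (w0 : V2) : enorm2 (Rot θ *ᵥ w0) = enorm2 w0 := by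
  unfold enorm2 Rot
  congr 1
  simp [mulVec, dotProduct, Fin.sum_univ_two]
  have h := Real.sin_sq_add_cos_sq θ
  ring_nf
  nlinarith [h]

lemma rot_hasDerivAt (ω0 : ℝ) (w0 : V2) (t : ℝ) :
    HasDerivAt (fun s => Rot (ω0 * s) *ᵥ w0)
      (ω0 • (j2 *ᵥ (Rot (ω0 * t) *ᵥ w0))) t := by
  rw [hasDerivAt_pi]
  intro i
  have hc : HasDerivAt (fun s : ℝ => Real.cos (ω0 * s)) (-Real.sin (ω0 * t) * ω0) t := by
    simpa [Function.comp_def] using (Real.hasDerivAt_cos (ω0 * t)).comp t ((hasDerivAt_id t).const_mul ω0)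
  have hs : HasDerivAt (fun s : ℝ => Real.sin (ω0 * s)) (Real.cos (ω0 * t) * ω0) t := by
    simpa [Function.comp_def] using (Real.hasDerivAt_sin (ω0 * t)).comp t ((hasDerivAt_id t).const_mul ω0)
  have key0 : HasDerivAt (fun s => Real.cos (ω0 * s) * w0 0 + -Real.sin (ω0 * s) * w0 1)
      (-Real.sin (ω0 * t) * ω0 * w0 0 + -(Real.cos (ω0 * t) * ω0) * w0 1) t :=
    (hc.mul_const _).add ((hs.neg).mul_const _)
  have key1 : HasDerivAt (fun s => Real.sin (ω0 * s) * w0 0 + Real.cos (ω0 * s) * w0 1)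
      (Real.cos (ω0 * t) * ω0 * w0 0 + -Real.sin (ω0 * t) * ω0 * w0 1) t :=
    (hs.mul_const _).add (hc.mul_const _)
  fin_cases i <;>
    simp only [Rot, j2, mulVec, dotProduct, Fin.sum_univ_two, Fin.mk_zero, Fin.mk_one,
      Fin.isValue, Matrix.cons_val', Matrix.cons_val_zero, Matrix.cons_val_one,
      Matrix.head_cons, Matrix.head_fin_const, Matrix.empty_val', Matrix.cons_val_fin_one,
      Pi.smul_apply, smul_eq_mul, Matrix.of_apply]
  · refine key0.congr_deriv ?_
    norm_num
    ring
  · refine key1.congr_deriv ?_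
    norm_num
    ring

/-- Consistency of the impedance load model with the synchronous
steady state: along any synchronous trajectory t ↦ R(ω₀t)w₀, the load current is
differentiable and satisfies d/dt i_l(R(ω₀t)w₀) = ω₀ j i_l(R(ω₀t)w₀). -/
theorem impedance_load_consistency (g b : ℝ → ℝ) (il : V2 → V2)
    (hil : ∀ w, il w = g (enorm2 w) • w + b (enorm2 w) • (j2 *ᵥ w))
    (ω0 : ℝ) (w0 : V2) (t : ℝ) :
    HasDerivAt (fun s => il (Rot (ω0 * s) *ᵥ w0))
      (ω0 • (j2 *ᵥ il (Rot (ω0 * t) *ᵥ w0))) t := by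
  set c := enorm2 w0 with hc
  have hnorm : ∀ θ, enorm2 (Rot θ *ᵥ w0) = c := fun θ => enorm2_rot θ w0
  have heq : (fun s => il (Rot (ω0 * s) *ᵥ w0)) =
      fun s => g c • (Rot (ω0 * s) *ᵥ w0) + b c • (j2 *ᵥ (Rot (ω0 * s) *ᵥ w0)) := by
    funext s; rw [hil, hnorm]
  rw [heq]
  have hF := rot_hasDerivAt ω0 w0 t
  have hF2 : HasDerivAt (fun s => j2 *ᵥ (Rot (ω0 * s) *ᵥ w0))
      (j2 *ᵥ (ω0 • (j2 *ᵥ (Rot (ω0 * t) *ᵥ w0)))) t := by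
    exact (Matrix.mulVecLin j2).toContinuousLinearMap.hasFDerivAt.comp_hasDerivAt t hF
  have := (hF.const_smul (g c)).add (hF2.const_smul (b c))
  refine this.congr_deriv ?_
  rw [hil, hnorm]
  rw [Matrix.mulVec_add, Matrix.mulVec_smul, Matrix.mulVec_smul, Matrix.mulVec_smul,
    smul_add, smul_comm ω0, smul_comm ω0]
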